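/- In classical linear logic extended with Mix and BiCut, the (weak) exponentials and coexponentials coincide up to provability: replacing ¿ by ? and ¡ by ! in the coexponential rules yields rules admissible from the exponential rules (with Mix and BiCut), and conversely the exponential rules with ? replaced by ¿ and ! replaced by ¡ are admissible from the coexponential rules (with Mix and BiCut). -/

import Mathlib

/-- Formulas of classical linear logic, extended with exponentials
(`ofc` = !, `whynot` = ?) and coexponentials (`claro` = ¡, `que` = ¿). -/
inductive Formula : Type
  | one | bot | zero | top
  | tensor : Formula → Formula → Formula
  | parr : Formula → Formula → Formula
  | oplus : Formula → Formula → Formula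
  | withF : Formula → Formula → Formula
  | ofc : Formula → Formula
  | whynot : Formula → Formula
  | claro : Formula → Formula
  | que : Formula → Formula
  deriving DecidableEq

/-- De Morgan linear negation. -/
def Formula.dual : Formula → Formula
  | one => bot
  | bot => one
  | zero => top
  | top => zero
  | tensor A B => parr A.dual B.dual
  | parr A B => tensor A.dual B.dual
  | oplus A B => withF A.dual B.dual
  | withF A B => oplus A.dual B.dual
  | ofc A => whynot A.dual
  | whynot A => ofc A.dual
  | claro A => que A.dual
  | que A => claro A.dual

/-- One-sided sequents: multisets of formulas. -/
abbrev Sequent := Multiset Formula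

/-- An extra rule set: a relation between a list of premises and a conclusion. -/
abbrev RuleSet := List Sequent → Sequent → Prop

/-- One-sided sequent calculus for classical linear logic
(multiplicatives and additives), extended by the rules in `R`. -/
inductive Prov (R : RuleSet) : Sequent → Prop
  | ax (A : Formula) : Prov R {A.dual, A}
  | cut {Γ Δ : Sequent} (A : Formula) :
      Prov R (A ::ₘ Γ) → Prov R (A.dual ::ₘ Δ) → Prov R (Γ + Δ)
  | one : Prov R {Formula.one}
  | bot {Γ} : Prov R Γ → Prov R (Formula.bot ::ₘ Γ)
  | tensor {Γ Δ} {A B} :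
      Prov R (A ::ₘ Γ) → Prov R (B ::ₘ Δ) → Prov R (Formula.tensor A B ::ₘ (Γ + Δ))
  | parr {Γ} {A B} :
      Prov R (A ::ₘ B ::ₘ Γ) → Prov R (Formula.parr A B ::ₘ Γ)
  | plusL {Γ} {A B} : Prov R (A ::ₘ Γ) → Prov R (Formula.oplus A B ::ₘ Γ)
  | plusR {Γ} {A B} : Prov R (B ::ₘ Γ) → Prov R (Formula.oplus A B ::ₘ Γ)
  | withR {Γ} {A B} :
      Prov R (A ::ₘ Γ) → Prov R (B ::ₘ Γ) → Prov R (Formula.withF A B ::ₘ Γ)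
  | top {Γ} : Prov R (Formula.top ::ₘ Γ)
  | extra {prems concl} : R prems concl → (∀ S ∈ prems, Prov R S) → Prov R concl

/-- The nullary Mix rule: no premises, empty conclusion. -/
def Mix0 : RuleSet := fun prems concl => prems = [] ∧ concl = 0

/-- The binary Mix rule. -/
def MixRule : RuleSet := fun prems concl => ∃ Γ Δ : Sequent, prems = [Γ, Δ] ∧ concl = Γ + Δ

/-- The binary cut rule. -/
def BiCutRule : RuleSet := fun prems concl =>
  ∃ (Γ Δ : Sequent) (A B : Formula),
    prems = [A ::ₘ B ::ₘ Γ, A.dual ::ₘ B.dual ::ₘ Δ] ∧ concl = Γ + Δ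

/-- The multicut rule. -/
def MultiCutRule : RuleSet := fun prems concl =>
  ∃ (Γ Δ : Sequent) (L : List Formula),
    prems = [Γ + ↑L, Δ + ↑(L.map Formula.dual)] ∧ concl = Γ + Δ

/-- Tensor-fold of a context with `¿` applied to each formula (empty fold is `1`). -/
def queTensor (L : List Formula) : Formula :=
  (L.map Formula.que).foldr Formula.tensor Formula.one

/-- Tensor-fold of a context with `?` applied to each formula (empty fold is `1`). -/
def whyTensor (L : List Formula) : Formula :=
  (L.map Formula.whynot).foldr Formula.tensor Formula.one

/-- The (weak) exponential rules: weakening, dereliction, contraction, promotion. -/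
def ExpRules : RuleSet := fun p c =>
  (∃ (Γ : Sequent) (A : Formula), p = [Γ] ∧ c = Formula.whynot A ::ₘ Γ) ∨
  (∃ (Γ : Sequent) (A : Formula), p = [A ::ₘ Γ] ∧ c = Formula.whynot A ::ₘ Γ) ∨
  (∃ (Γ : Sequent) (A : Formula),
      p = [Formula.whynot A ::ₘ Formula.whynot A ::ₘ Γ] ∧ c = Formula.whynot A ::ₘ Γ) ∨
  (∃ (L : List Formula) (A : Formula),
      p = [A ::ₘ ↑(L.map Formula.whynot)] ∧ c = Formula.ofc A ::ₘ ↑(L.map Formula.whynot))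

/-- The (weak) coexponential rules: ¿w, ¿d, distributed contraction ¿c,
and copromotion. -/
def CoexpRules : RuleSet := fun p c =>
  (∃ A : Formula, p = [] ∧ c = ({Formula.que A} : Sequent)) ∨
  (∃ (Γ : Sequent) (A : Formula), p = [A ::ₘ Γ] ∧ c = Formula.que A ::ₘ Γ) ∨
  (∃ (Γ Δ : Sequent) (A : Formula),
      p = [Formula.que A ::ₘ Γ, Formula.que A ::ₘ Δ] ∧ c = Formula.que A ::ₘ (Γ + Δ)) ∨
  (∃ (L : List Formula) (A : Formula),
      p = [({queTensor L, A} : Sequent)] ∧ c = ({queTensor L, Formula.claro A} : Sequent))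

/-- Coexponential rules with `¿` replaced by `?` and `¡` replaced by `!`. -/
def CoexpRulesSubst : RuleSet := fun p c =>
  (∃ A : Formula, p = [] ∧ c = ({Formula.whynot A} : Sequent)) ∨
  (∃ (Γ : Sequent) (A : Formula), p = [A ::ₘ Γ] ∧ c = Formula.whynot A ::ₘ Γ) ∨
  (∃ (Γ Δ : Sequent) (A : Formula),
      p = [Formula.whynot A ::ₘ Γ, Formula.whynot A ::ₘ Δ] ∧
      c = Formula.whynot A ::ₘ (Γ + Δ)) ∨
  (∃ (L : List Formula) (A : Formula),
      p = [({whyTensor L, A} : Sequent)] ∧ c = ({whyTensor L, Formula.ofc A} : Sequent))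

/-- Exponential rules with `?` replaced by `¿` and `!` replaced by `¡`. -/
def ExpRulesSubst : RuleSet := fun p c =>
  (∃ (Γ : Sequent) (A : Formula), p = [Γ] ∧ c = Formula.que A ::ₘ Γ) ∨
  (∃ (Γ : Sequent) (A : Formula), p = [A ::ₘ Γ] ∧ c = Formula.que A ::ₘ Γ) ∨
  (∃ (Γ : Sequent) (A : Formula),
      p = [Formula.que A ::ₘ Formula.que A ::ₘ Γ] ∧ c = Formula.que A ::ₘ Γ) ∨
  (∃ (L : List Formula) (A : Formula),
      p = [A ::ₘ ↑(L.map Formula.que)] ∧ c = Formula.claro A ::ₘ ↑(L.map Formula.que))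

/-- CLL with exponentials, Mix and BiCut. -/
def ExpMB : RuleSet := fun p c => ExpRules p c ∨ MixRule p c ∨ BiCutRule p c

/-- CLL with coexponentials, Mix and BiCut. -/
def CoexpMB : RuleSet := fun p c => CoexpRules p c ∨ MixRule p c ∨ BiCutRule p c

theorem Prov.cast {R : RuleSet} {S T : Sequent} (h : S = T) (hS : Prov R S) : Prov R T :=
  h ▸ hS

/-- `R` admits binary Mix. -/
def HasMix (R : RuleSet) : Prop := ∀ ⦃Γ Δ : Sequent⦄, Prov R Γ → Prov R Δ → Prov R (Γ + Δ)

/-- `R` admits BiCut. -/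
def HasBiCut (R : RuleSet) : Prop := ∀ ⦃Γ Δ : Sequent⦄ (A B : Formula),
  Prov R (A ::ₘ B ::ₘ Γ) → Prov R (A.dual ::ₘ B.dual ::ₘ Δ) → Prov R (Γ + Δ)

theorem hasMix (R : RuleSet) (h : ∀ p c, MixRule p c → R p c) : HasMix R := by
  intro Γ Δ hΓ hΔ
  exact Prov.extra (h _ _ ⟨Γ, Δ, rfl, rfl⟩) (by
    intro S hS; simp only [List.mem_cons, List.mem_singleton, List.not_mem_nil, or_false] at hS
    rcases hS with rfl | rfl <;> assumption)

theorem hasBiCut (R : RuleSet) (h : ∀ p c, BiCutRule p c → R p c) : HasBiCut R := by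
  intro Γ Δ A B h1 h2
  exact Prov.extra (h _ _ ⟨Γ, Δ, A, B, rfl, rfl⟩) (by
    intro S hS; simp only [List.mem_cons, List.mem_singleton, List.not_mem_nil, or_false] at hS
    rcases hS with rfl | rfl <;> assumption)

/-- The empty sequent is provable from BiCut. -/
theorem prov0 {R : RuleSet} (hB : HasBiCut R) : Prov R (0 : Sequent) := by
  have h1 : Prov R (Formula.bot ::ₘ Formula.one ::ₘ 0) := Prov.ax Formula.one
  have h2 : Prov R (Formula.bot.dual ::ₘ Formula.one.dual ::ₘ 0) :=
    (Prov.ax Formula.one).cast (Multiset.cons_swap _ _ _)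
  exact (hB Formula.bot Formula.one h1 h2).cast (by simp)

/-- Single-sequent tensor introduction, admissible from BiCut. -/
theorem tensorIntro {R : RuleSet} (hB : HasBiCut R) {Γ : Sequent} {A B : Formula}
    (h : Prov R (A ::ₘ B ::ₘ Γ)) : Prov R (Formula.tensor A B ::ₘ Γ) := by
  have hax : Prov R (A.dual ::ₘ B.dual ::ₘ {Formula.tensor A B}) := by
    have t := Prov.tensor (R := R) (Γ := {A.dual}) (Δ := {B.dual})
      ((Prov.ax A).cast (Multiset.cons_swap _ _ _))
      ((Prov.ax B).cast (Multiset.cons_swap _ _ _))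
    exact t.cast (by
      simp only [← Multiset.singleton_add]; abel)
  exact (hB A B h hax).cast (by
    simp only [← Multiset.singleton_add]; abel)

/-- Fold a list of formulas in a sequent into their tensor. -/
theorem foldTensorIntro {R : RuleSet} (hM : HasMix R) (hB : HasBiCut R) :
    ∀ (M : List Formula) (Δ : Sequent), Prov R (Δ + ↑M) →
      Prov R (M.foldr Formula.tensor Formula.one ::ₘ Δ)
  | [], Δ, h => by
      have h0 : Prov R Δ := h.cast (by simp)
      exact (hM (Prov.one (R := R)) h0).cast (by
        simp only [← Multiset.singleton_add]; rfl)
  | a :: M, Δ, h => by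
      have ih := foldTensorIntro hM hB M (a ::ₘ Δ) (h.cast (by
        simp only [Multiset.cons_coe, ← Multiset.singleton_add]; abel))
      exact tensorIntro hB (ih.cast (Multiset.cons_swap _ _ _))

/-- Unfold the dual of a tensor-fold, given "identity" sequents for
each member of the list. -/
theorem foldTensorDual {R : RuleSet} (hM : HasMix R) (hB : HasBiCut R) :
    ∀ (M : List Formula), (∀ m ∈ M, Prov R (m.dual ::ₘ {m})) →
      Prov R ((M.foldr Formula.tensor Formula.one).dual ::ₘ ↑M)
  | [], _ => (Prov.bot (prov0 hB)).cast (by rfl)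
  | a :: M, hax => by
      have ih := foldTensorDual hM hB M (fun m hm => hax m (List.mem_cons_of_mem _ hm))
      have ha := hax a List.mem_cons_self
      have hmix := hM ha ih
      have hmix' : Prov R (a.dual ::ₘ (M.foldr Formula.tensor Formula.one).dual ::ₘ
          (a ::ₘ ↑M)) := hmix.cast (by simp only [← Multiset.singleton_add]; abel)
      exact (Prov.parr hmix').cast (by simp [Formula.dual, Multiset.cons_coe])

/-- in CLL with Mix and BiCut, (weak) exponentials and
coexponentials coincide up to provability: the coexponential rules with
`¿ ↦ ?`, `¡ ↦ !` are admissible from the exponential rules, and the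
exponential rules with `? ↦ ¿`, `! ↦ ¡` are admissible from the
coexponential rules. -/
theorem exp_coexp_coincide_mix_bicut :
    (∀ (p : List Sequent) (c : Sequent),
      CoexpRulesSubst p c → (∀ S ∈ p, Prov ExpMB S) → Prov ExpMB c) ∧
    (∀ (p : List Sequent) (c : Sequent),
      ExpRulesSubst p c → (∀ S ∈ p, Prov CoexpMB S) → Prov CoexpMB c) := by
  constructor
  · -- CoexpRulesSubst admissible in ExpMB
    have hM : HasMix ExpMB := hasMix _ (fun _ _ h => Or.inr (Or.inl h))
    have hB : HasBiCut ExpMB := hasBiCut _ (fun _ _ h => Or.inr (Or.inr h))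
    intro p c hrule hp
    rcases hrule with ⟨A, rfl, rfl⟩ | ⟨Γ, A, rfl, rfl⟩ | ⟨Γ, Δ, A, rfl, rfl⟩ | ⟨L, A, rfl, rfl⟩
    · -- weakening on the empty sequent
      exact Prov.extra (R := ExpMB) (Or.inl (Or.inl ⟨0, A, rfl, rfl⟩))
        (by intro S hS; simp only [List.mem_singleton] at hS; subst hS; exact prov0 hB)
    · -- dereliction
      exact Prov.extra (R := ExpMB) (Or.inl (Or.inr (Or.inl ⟨Γ, A, rfl, rfl⟩)))
        (by intro S hS; exact hp S hS)
    · -- distributed contraction from Mix + contraction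
      have h1 : Prov ExpMB (Formula.whynot A ::ₘ Γ) := hp _ (by simp)
      have h2 : Prov ExpMB (Formula.whynot A ::ₘ Δ) := hp _ (by simp)
      have hm := hM h1 h2
      have hmm : Prov ExpMB (Formula.whynot A ::ₘ Formula.whynot A ::ₘ (Γ + Δ)) :=
        hm.cast (by simp only [← Multiset.singleton_add]; abel)
      exact Prov.extra (R := ExpMB) (Or.inl (Or.inr (Or.inr (Or.inl ⟨Γ + Δ, A, rfl, rfl⟩))))
        (by intro S hS; simp only [List.mem_singleton] at hS; subst hS; exact hmm)
    · -- copromotion from promotion + Mix + BiCut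
      have h : Prov ExpMB ({whyTensor L, A} : Sequent) := hp _ (by simp)
      -- identity sequents ⊢ !a⊥, ?a for members of L.map whynot
      have haxw : ∀ m ∈ L.map Formula.whynot, Prov ExpMB (m.dual ::ₘ {m}) := by
        intro m hm
        rcases List.mem_map.1 hm with ⟨a, _, rfl⟩
        have hd : Prov ExpMB (a.dual ::ₘ ({Formula.whynot a} : Sequent)) := by
          have := Prov.extra (R := ExpMB)
            (Or.inl (Or.inr (Or.inl ⟨{a.dual}, a, rfl, rfl⟩)))
            (by intro S hS; simp only [List.mem_singleton] at hS; subst hS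
                exact (Prov.ax a).cast (Multiset.cons_swap _ _ _))
          exact this.cast (Multiset.cons_swap _ _ _)
        exact Prov.extra (R := ExpMB)
          (Or.inl (Or.inr (Or.inr (Or.inr ⟨[a], a.dual, rfl, rfl⟩))))
          (by intro S hS; simp only [List.mem_singleton] at hS; subst hS; exact hd)
      have hdual : Prov ExpMB ((whyTensor L).dual ::ₘ ↑(L.map Formula.whynot)) :=
        foldTensorDual hM hB (L.map Formula.whynot) haxw
      have hcut : Prov ExpMB (({A} : Sequent) + ↑(L.map Formula.whynot)) :=
        Prov.cut (whyTensor L) h hdual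
      have hprom : Prov ExpMB (Formula.ofc A ::ₘ ↑(L.map Formula.whynot)) :=
        Prov.extra (R := ExpMB) (Or.inl (Or.inr (Or.inr (Or.inr ⟨L, A, rfl, rfl⟩))))
          (by intro S hS; simp only [List.mem_singleton] at hS; subst hS
              exact hcut.cast (Multiset.singleton_add _ _))
      have := foldTensorIntro hM hB (L.map Formula.whynot) {Formula.ofc A}
        (hprom.cast (Multiset.singleton_add _ _).symm)
      exact this
  · -- ExpRulesSubst admissible in CoexpMB
    have hM : HasMix CoexpMB := hasMix _ (fun _ _ h => Or.inr (Or.inl h))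
    have hB : HasBiCut CoexpMB := hasBiCut _ (fun _ _ h => Or.inr (Or.inr h))
    intro p c hrule hp
    rcases hrule with ⟨Γ, A, rfl, rfl⟩ | ⟨Γ, A, rfl, rfl⟩ | ⟨Γ, A, rfl, rfl⟩ | ⟨L, A, rfl, rfl⟩
    · -- weakening from nullary ¿w + Mix
      have hq : Prov CoexpMB ({Formula.que A} : Sequent) :=
        Prov.extra (R := CoexpMB) (Or.inl (Or.inl ⟨A, rfl, rfl⟩)) (by simp)
      have hΓ : Prov CoexpMB Γ := hp _ (by simp)
      exact (hM hq hΓ).cast (Multiset.singleton_add _ _)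
    · -- dereliction
      exact Prov.extra (R := CoexpMB) (Or.inl (Or.inr (Or.inl ⟨Γ, A, rfl, rfl⟩)))
        (by intro S hS; exact hp S hS)
    · -- contraction from distributed contraction + BiCut
      have h : Prov CoexpMB (Formula.que A ::ₘ Formula.que A ::ₘ Γ) := hp _ (by simp)
      have haux : Prov CoexpMB
          ((Formula.que A).dual ::ₘ (Formula.que A).dual ::ₘ ({Formula.que A} : Sequent)) := by
        have hdist := Prov.extra (R := CoexpMB)
          (Or.inl (Or.inr (Or.inr (Or.inl
            ⟨{(Formula.que A).dual}, {(Formula.que A).dual}, A, rfl, rfl⟩))))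
          (by intro S hS
              simp only [List.mem_cons, List.mem_singleton, List.not_mem_nil, or_false] at hS
              rcases hS with rfl | rfl <;>
                exact (Prov.ax (Formula.que A)).cast (Multiset.cons_swap _ _ _))
        exact hdist.cast (by simp only [← Multiset.singleton_add]; abel)
      exact (hB (Formula.que A) (Formula.que A) h haux).cast
        (by simp only [← Multiset.singleton_add]; abel)
    · -- promotion from copromotion + Mix + BiCut
      have h : Prov CoexpMB (A ::ₘ ↑(L.map Formula.que)) := hp _ (by simp)
      have ht : Prov CoexpMB ({queTensor L, A} : Sequent) :=
        foldTensorIntro hM hB (L.map Formula.que) {A}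
          (h.cast (Multiset.singleton_add _ _).symm)
      have hco : Prov CoexpMB ({queTensor L, Formula.claro A} : Sequent) :=
        Prov.extra (R := CoexpMB) (Or.inl (Or.inr (Or.inr (Or.inr ⟨L, A, rfl, rfl⟩))))
          (by intro S hS; simp only [List.mem_singleton] at hS; subst hS; exact ht)
      have hdual : Prov CoexpMB ((queTensor L).dual ::ₘ ↑(L.map Formula.que)) :=
        foldTensorDual hM hB (L.map Formula.que) (fun m _ => Prov.ax m)
      exact (Prov.cut (queTensor L) hco hdual).cast (Multiset.singleton_add _ _)
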